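/- Let A be an algebra and M an ideal of A. For every n ∈ ℕ, the intersection over k + l = n of (M^{k+1} ⊗ A + A ⊗ M^{l+1}) equals the sum over i + j > n of M^i ⊗ M^j. -/

import Mathlib

open TensorProduct

variable {K A : Type*} [Field K] [Ring A] [Algebra K A]

/-- The image of `p ⊗ q` inside `A ⊗ A`. -/
noncomputable def tensorSub (p q : Submodule K A) : Submodule K (A ⊗[K] A) :=
  LinearMap.range (TensorProduct.map p.subtype q.subtype)

/-- Powers of a submodule, with the convention `M⁰ = A`. -/
noncomputable def Mpow (M : Submodule K A) : ℕ → Submodule K A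
  | 0 => ⊤
  | n + 1 => M ^ (n + 1)

lemma tensorSub_mono {p p' q q' : Submodule K A} (hp : p ≤ p') (hq : q ≤ q') :
    tensorSub p q ≤ tensorSub p' q' := by
  rintro x ⟨y, rfl⟩
  refine ⟨TensorProduct.map (Submodule.inclusion hp) (Submodule.inclusion hq) y, ?_⟩
  rw [← LinearMap.comp_apply, ← TensorProduct.map_comp,
    Submodule.subtype_comp_inclusion, Submodule.subtype_comp_inclusion]

lemma pow_mul_mem (M : Submodule K A)
    (hM : ∀ a : A, ∀ m ∈ M, a * m ∈ M ∧ m * a ∈ M) :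
    ∀ a : ℕ, ∀ x ∈ M ^ (a + 1), ∀ m ∈ M, x * m ∈ M ^ (a + 1) := by
  intro a
  induction a with
  | zero =>
    intro x hx m hm
    rw [pow_one] at *
    exact (hM x m hm).1
  | succ b ih =>
    intro x hx m hm
    rw [pow_succ] at hx ⊢
    refine Submodule.mul_induction_on hx ?_ ?_
    · intro y hy z hz
      rw [mul_assoc]
      exact Submodule.mul_mem_mul hy (hM z m hm).1
    · intro y z hy hz
      rw [add_mul]
      exact add_mem hy hz

lemma pow_antitone (M : Submodule K A)
    (hM : ∀ a : A, ∀ m ∈ M, a * m ∈ M ∧ m * a ∈ M) :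
    ∀ a b : ℕ, a + 1 ≤ b + 1 → M ^ (b + 1) ≤ M ^ (a + 1) := by
  intro a b hab
  induction b with
  | zero =>
    have : a = 0 := by omega
    subst this; exact le_rfl
  | succ c ih =>
    rcases Nat.lt_or_ge a (c + 1) with h | h
    · refine le_trans ?_ (ih (by omega))
      rw [pow_succ]
      refine Submodule.mul_le.mpr ?_
      intro x hx m hm
      exact pow_mul_mem M hM c x hx m hm
    · have : a = c + 1 := by omega
      subst this; exact le_rfl

lemma Mpow_le_pow (M : Submodule K A)
    (hM : ∀ a : A, ∀ m ∈ M, a * m ∈ M ∧ m * a ∈ M)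
    {i k : ℕ} (h : k + 1 ≤ i) : Mpow M i ≤ M ^ (k + 1) := by
  obtain ⟨j, rfl⟩ : ∃ j, i = j + 1 := ⟨i - 1, by omega⟩
  show M ^ (j + 1) ≤ M ^ (k + 1)
  exact pow_antitone M hM k j (by omega)

lemma tmap_zero_left {P Q R S : Type*} [AddCommGroup P] [AddCommGroup Q]
    [AddCommGroup R] [AddCommGroup S] [Module K P] [Module K Q] [Module K R] [Module K S]
    (g : Q →ₗ[K] S) : TensorProduct.map (0 : P →ₗ[K] R) g = 0 := by
  apply TensorProduct.ext'
  intro a b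
  simp

lemma tmap_zero_right {P Q R S : Type*} [AddCommGroup P] [AddCommGroup Q]
    [AddCommGroup R] [AddCommGroup S] [Module K P] [Module K Q] [Module K R] [Module K S]
    (f : P →ₗ[K] R) : TensorProduct.map f (0 : Q →ₗ[K] S) = 0 := by
  apply TensorProduct.ext'
  intro a b
  simp

lemma tmap_sum_sum {ι : Type*} (s t : Finset ι) (f g : ι → (A →ₗ[K] A)) :
    TensorProduct.map (∑ i ∈ s, f i) (∑ j ∈ t, g j)
      = ∑ i ∈ s, ∑ j ∈ t, TensorProduct.map (f i) (g j) := by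
  apply TensorProduct.ext'
  intro a b
  simp [TensorProduct.sum_tmul, TensorProduct.tmul_sum]
  rw [Finset.sum_comm]

/-- For an ideal `M` of an algebra `A` and any `n ∈ ℕ`,
`⋂_{k+l=n} (M^{k+1} ⊗ A + A ⊗ M^{l+1}) = Σ_{i+j>n} M^i ⊗ M^j`. -/
theorem stmt_9 (M : Submodule K A)
    (hM : ∀ a : A, ∀ m ∈ M, a * m ∈ M ∧ m * a ∈ M) (n : ℕ) :
    (⨅ p ∈ Finset.HasAntidiagonal.antidiagonal n,
        (tensorSub (M ^ (p.1 + 1)) ⊤ ⊔ tensorSub ⊤ (M ^ (p.2 + 1))))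
      = ⨆ (p : ℕ × ℕ) (_ : n < p.1 + p.2), tensorSub (Mpow M p.1) (Mpow M p.2) := by
  classical
  apply le_antisymm
  · -- hard direction
    intro x hx
    -- projections onto the powers of M
    have hproj : ∀ i : ℕ, ∃ P : A →ₗ[K] A,
        (∀ a, P a ∈ M ^ (i + 1)) ∧ ∀ a ∈ M ^ (i + 1), P a = a := by
      intro i
      obtain ⟨q, hq⟩ := Submodule.exists_isCompl (M ^ (i + 1))
      refine ⟨(M ^ (i + 1)).subtype ∘ₗ (M ^ (i + 1)).linearProjOfIsCompl q hq,
        fun a => ?_, fun a ha => ?_⟩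
      · exact ((M ^ (i + 1)).linearProjOfIsCompl q hq a).2
      · exact congrArg Subtype.val
          (Submodule.linearProjOfIsCompl_apply_left hq ⟨a, ha⟩)
    choose P hP1 hP2 using hproj
    set Q : ℕ → (A →ₗ[K] A) := fun i => Nat.casesOn i LinearMap.id P with hQdef
    set e : ℕ → (A →ₗ[K] A) := fun i => if i ≤ n then Q i - Q (i + 1) else Q i with hedef
    have hQ0 : Q 0 = LinearMap.id := rfl
    have hQs : ∀ i, Q (i + 1) = P i := fun i => rfl
    -- e i lands in Mpow M i
    have he1 : ∀ i, ∀ a, e i a ∈ Mpow M i := by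
      intro i a
      by_cases hi : i ≤ n
      · have : e i a = Q i a - Q (i + 1) a := by
          simp [hedef, hi]
        rw [this]
        cases i with
        | zero => exact Submodule.mem_top
        | succ j =>
          show _ ∈ M ^ (j + 1)
          refine sub_mem (hP1 j a) ?_
          exact pow_antitone M hM j (j + 1) (by omega) (hP1 (j + 1) a)
      · have : e i a = Q i a := by simp [hedef, hi]
        rw [this]
        cases i with
        | zero => exact Submodule.mem_top
        | succ j =>
          show _ ∈ M ^ (j + 1)
          exact hP1 j a
    -- e i kills M ^ (i+1) for i ≤ n
    have he2 : ∀ i ≤ n, ∀ a ∈ M ^ (i + 1), e i a = 0 := by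
      intro i hi a ha
      have h1 : e i a = Q i a - Q (i + 1) a := by simp [hedef, hi]
      have h2 : Q (i + 1) a = a := by rw [hQs]; exact hP2 i a ha
      have h3 : Q i a = a := by
        cases i with
        | zero => rfl
        | succ j =>
          rw [hQs]
          exact hP2 j a (pow_antitone M hM j (j + 1) (by omega) ha)
      rw [h1, h2, h3, sub_self]
    -- the sum of the e i is the identity
    have hesum : ∑ i ∈ Finset.range (n + 2), e i = LinearMap.id := by
      rw [Finset.sum_range_succ]
      have h1 : ∀ i ∈ Finset.range (n + 1), e i = Q i - Q (i + 1) := by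
        intro i hi
        rw [Finset.mem_range] at hi
        simp [hedef, show i ≤ n by omega]
      rw [Finset.sum_congr rfl h1, Finset.sum_range_sub' Q]
      have h2 : e (n + 1) = Q (n + 1) := by simp [hedef]
      rw [h2, hQ0]
      abel
    -- decompose x
    have hdecomp : x = ∑ p ∈ Finset.range (n + 2) ×ˢ Finset.range (n + 2),
        TensorProduct.map (e p.1) (e p.2) x := by
      have h1 : (TensorProduct.map (LinearMap.id (M := A)) (LinearMap.id (M := A))) x = x := by
        rw [TensorProduct.map_id]; rfl
      conv_lhs => rw [← h1]
      rw [← hesum, tmap_sum_sum, Finset.sum_product]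
      simp [LinearMap.sum_apply]
    rw [hdecomp]
    refine Submodule.sum_mem _ ?_
    rintro ⟨i, j⟩ hij
    rw [Finset.mem_product, Finset.mem_range, Finset.mem_range] at hij
    by_cases hn : n < i + j
    · -- this term lies in tensorSub (Mpow M i) (Mpow M j)
      refine Submodule.mem_iSup_of_mem (i, j) (Submodule.mem_iSup_of_mem hn ?_)
      have hfact : TensorProduct.map (e i) (e j)
          = TensorProduct.map (Mpow M i).subtype (Mpow M j).subtype ∘ₗ
            TensorProduct.map ((e i).codRestrict (Mpow M i) (he1 i))
              ((e j).codRestrict (Mpow M j) (he1 j)) := by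
        rw [← TensorProduct.map_comp, LinearMap.subtype_comp_codRestrict,
          LinearMap.subtype_comp_codRestrict]
      rw [hfact]
      exact ⟨_, rfl⟩
    · -- this term is zero
      push_neg at hn
      have hin : i ≤ n := by omega
      have hjn : j ≤ n := by omega
      have hmem : ((i, n - i) : ℕ × ℕ) ∈ Finset.HasAntidiagonal.antidiagonal n :=
        Finset.HasAntidiagonal.mem_antidiagonal.mpr (by omega)
      have hx' : x ∈ tensorSub (M ^ (i + 1)) ⊤ ⊔ tensorSub ⊤ (M ^ (n - i + 1)) := by
        have := (Submodule.mem_iInf _).mp hx ((i, n - i) : ℕ × ℕ)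
        exact (Submodule.mem_iInf _).mp this hmem
      have hker : tensorSub (M ^ (i + 1)) ⊤ ⊔ tensorSub ⊤ (M ^ (n - i + 1))
          ≤ LinearMap.ker (TensorProduct.map (e i) (e j)) := by
        refine sup_le ?_ ?_
        · rintro _ ⟨y, rfl⟩
          rw [LinearMap.mem_ker, ← LinearMap.comp_apply, ← TensorProduct.map_comp]
          have hz : e i ∘ₗ (M ^ (i + 1)).subtype = 0 := by
            apply LinearMap.ext
            intro a
            exact he2 i hin a a.2
          rw [hz, tmap_zero_left, LinearMap.zero_apply]
        · rintro _ ⟨y, rfl⟩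
          rw [LinearMap.mem_ker, ← LinearMap.comp_apply, ← TensorProduct.map_comp]
          have hz : e j ∘ₗ (M ^ (n - i + 1)).subtype = 0 := by
            apply LinearMap.ext
            intro a
            exact he2 j hjn a
              (pow_antitone M hM j (n - i) (by omega) a.2)
          rw [hz, tmap_zero_right, LinearMap.zero_apply]
      have := hker hx'
      rw [LinearMap.mem_ker] at this
      rw [this]
      exact Submodule.zero_mem _
  · -- easy direction
    refine iSup_le fun p => iSup_le fun hp => le_iInf fun q => le_iInf fun hq => ?_
    rw [Finset.HasAntidiagonal.mem_antidiagonal] at hq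
    by_cases h : q.1 + 1 ≤ p.1
    · refine le_trans ?_ le_sup_left
      exact tensorSub_mono (Mpow_le_pow M hM h) le_top
    · refine le_trans ?_ le_sup_right
      exact tensorSub_mono le_top (Mpow_le_pow M hM (by omega))
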